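/- Augmented clause sets are well-behaved: for every finite set S of SNF clauses, if S is satisfiable then Aug(S) has a normal model; equivalently, Aug(S) is either unsatisfiable or has a normal model. Moreover, any model of S can be extended to a normal model of Aug(S) by giving each w_l, at every index, the same truth value as ¬l ∧ ◇l. -/

import Mathlib

/-- A literal over proposition symbols `P`: a proposition symbol (`pos = true`)
or a negated proposition symbol (`pos = false`). -/
structure Lit (P : Type) where
  pos : Bool
  sym : P

/-- The complement of a literal. -/
def Lit.negate {P : Type} (l : Lit P) : Lit P := ⟨!l.pos, l.sym⟩

/-- A literal holds in model `σ` at index `i`. -/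
def Lit.holds {P : Type} (σ : ℕ → Set P) (i : ℕ) (l : Lit P) : Prop :=
  if l.pos then l.sym ∈ σ i else l.sym ∉ σ i

/-- A conjunction of literals holds (the empty conjunction is the constant `true`). -/
def conjHolds {P : Type} (σ : ℕ → Set P) (i : ℕ) (L : List (Lit P)) : Prop :=
  ∀ l ∈ L, Lit.holds σ i l

/-- A disjunction of literals holds. -/
def disjHolds {P : Type} (σ : ℕ → Set P) (i : ℕ) (L : List (Lit P)) : Prop :=
  ∃ l ∈ L, Lit.holds σ i l

/-- SNF clauses: initial clauses `start ⇒ ⋁ rhs`, step clauses `⋀ lhs ⇒ ◯⋁ rhs`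
(an empty `lhs` is the constant `true`), and sometime clauses `⋀ lhs ⇒ ◇ev`. -/
inductive SNF (P : Type) : Type
  | initial (rhs : List (Lit P))
  | step (lhs rhs : List (Lit P))
  | sometime (lhs : List (Lit P)) (ev : Lit P)

/-- Satisfaction of an SNF clause in model `σ` at index `i`. -/
def SNF.holds {P : Type} (σ : ℕ → Set P) (i : ℕ) : SNF P → Prop
  | .initial rhs => i = 0 → disjHolds σ i rhs
  | .step lhs rhs => conjHolds σ i lhs → disjHolds σ (i + 1) rhs
  | .sometime lhs ev => conjHolds σ i lhs → ∃ k, i ≤ k ∧ Lit.holds σ k ev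

/-- `σ` is a model of the clause set `S`, i.e. `(σ,0) ⊨ □⋀_{A ∈ S} A`. -/
def IsModel {P : Type} (σ : ℕ → Set P) (S : Set (SNF P)) : Prop :=
  ∀ (i : ℕ), ∀ c ∈ S, SNF.holds σ i c

/-- The proposition symbols occurring in an SNF clause. -/
def SNF.syms {P : Type} : SNF P → Set P
  | .initial rhs => {p | ∃ l ∈ rhs, Lit.sym l = p}
  | .step lhs rhs => {p | ∃ l ∈ lhs ++ rhs, Lit.sym l = p}
  | .sometime lhs ev => {p | ∃ l ∈ ev :: lhs, Lit.sym l = p}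

/-- The proposition symbols occurring in a clause set. -/
def symsOf {P : Type} (S : Set (SNF P)) : Set P := ⋃ c ∈ S, c.syms

/-- The literals occurring as eventualities (◇l on the right-hand side of
sometime clauses) in `S`. -/
def evLits {P : Type} (S : Set (SNF P)) : Set (Lit P) :=
  {l | ∃ lhs, SNF.sometime lhs l ∈ S}

/-- The positive literal on symbol `p`. -/
def posLit {P : Type} (p : P) : Lit P := ⟨true, p⟩

/-- The augmented clause set `Aug(S)`, where `w l` is the fresh symbol `w_l`
for each eventuality literal `l` of `S`: adds `w_l ⇒ ◯(l ∨ w_l)` and, for each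
sometime clause `C ⇒ ◇l` of `S`, `start ⇒ (¬C ∨ l ∨ w_l)` and `true ⇒ ◯(¬C ∨ l ∨ w_l)`. -/
def Aug {P : Type} (S : Set (SNF P)) (w : Lit P → P) : Set (SNF P) :=
  S ∪ {c | ∃ l ∈ evLits S, c = SNF.step [posLit (w l)] [l, posLit (w l)]}
    ∪ {c | ∃ lhs l, SNF.sometime lhs l ∈ S ∧
          c = SNF.initial (lhs.map Lit.negate ++ [l, posLit (w l)])}
    ∪ {c | ∃ lhs l, SNF.sometime lhs l ∈ S ∧
          c = SNF.step [] (lhs.map Lit.negate ++ [l, posLit (w l)])}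

/-- The symbols `w_l` are fresh: none occurs in `S`, and distinct eventuality
literals receive distinct fresh symbols. -/
def FreshW {P : Type} (S : Set (SNF P)) (w : Lit P → P) : Prop :=
  (∀ l ∈ evLits S, ∀ c ∈ S, w l ∉ SNF.syms c) ∧ Set.InjOn w (evLits S)

/-- A normal model of `Aug(S)`: a model of `Aug(S)` which moreover satisfies
`□(w_l ⇔ (¬l ∧ ◇l))` for each eventuality literal `l` of `S`. -/
def NormalModel {P : Type} (σ : ℕ → Set P) (S : Set (SNF P)) (w : Lit P → P) : Prop :=
  IsModel σ (Aug S w) ∧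
  ∀ (i : ℕ), ∀ l ∈ evLits S,
    (w l ∈ σ i ↔ (¬ Lit.holds σ i l ∧ ∃ k, i ≤ k ∧ Lit.holds σ k l))

/-- Extend a model `σ` of `S` by giving each `w_l`, at every index, the truth
value of `¬l ∧ ◇l` (all other symbols keep their value, and every symbol in the
image of `w` not of the prescribed form is made false). -/
def extendW {P : Type} (S : Set (SNF P)) (w : Lit P → P) (σ : ℕ → Set P) : ℕ → Set P :=
  fun i => {p | (p ∉ w '' evLits S ∧ p ∈ σ i) ∨
    ∃ l ∈ evLits S, p = w l ∧ ¬ Lit.holds σ i l ∧ ∃ k, i ≤ k ∧ Lit.holds σ k l}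

lemma negate_holds {P : Type} (σ : ℕ → Set P) (i : ℕ) (l : Lit P) :
    Lit.holds σ i (Lit.negate l) ↔ ¬ Lit.holds σ i l := by
  unfold Lit.holds Lit.negate
  cases l.pos <;> simp

lemma posLit_holds {P : Type} (σ : ℕ → Set P) (i : ℕ) (p : P) :
    Lit.holds σ i (posLit p) ↔ p ∈ σ i := by
  simp [Lit.holds, posLit]

lemma key_extend {P : Type} (S : Set (SNF P)) (w : Lit P → P) (hw : FreshW S w)
    (σ : ℕ → Set P) (hσ : IsModel σ S) : NormalModel (extendW S w σ) S w := by
  set τ := extendW S w σ with hτ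
  -- basic membership facts
  have hmem : ∀ p, p ∉ w '' evLits S → ∀ i, (p ∈ τ i ↔ p ∈ σ i) := by
    intro p hp i
    constructor
    · rintro (⟨_, h⟩ | ⟨l, hl, rfl, _⟩)
      · exact h
      · exact absurd ⟨l, hl, rfl⟩ hp
    · intro h; exact Or.inl ⟨hp, h⟩
  have hW : ∀ l ∈ evLits S, ∀ i,
      (w l ∈ τ i ↔ (¬ Lit.holds σ i l ∧ ∃ k, i ≤ k ∧ Lit.holds σ k l)) := by
    intro l hl i
    constructor
    · rintro (⟨hni, _⟩ | ⟨l', hl', he, h1, h2⟩)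
      · exact absurd ⟨l, hl, rfl⟩ hni
      · have : l = l' := hw.2 hl hl' he
        subst this; exact ⟨h1, h2⟩
    · rintro ⟨h1, h2⟩
      exact Or.inr ⟨l, hl, rfl, h1, h2⟩
  have hfresh : ∀ c ∈ S, ∀ p ∈ SNF.syms c, p ∉ w '' evLits S := by
    rintro c hc p hp ⟨l, hl, rfl⟩
    exact hw.1 l hl c hc hp
  have hLit : ∀ l : Lit P, l.sym ∉ w '' evLits S → ∀ i,
      (Lit.holds τ i l ↔ Lit.holds σ i l) := by
    intro l hl i
    unfold Lit.holds
    split <;> simp [hmem l.sym hl i]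
  have hev : ∀ l ∈ evLits S, l.sym ∉ w '' evLits S := by
    rintro l ⟨lhs, hmemS⟩
    exact hfresh _ hmemS l.sym ⟨l, List.mem_cons_self, rfl⟩
  -- common argument for the two families of added clauses
  have hcommon : ∀ (lhs : List (Lit P)) (l : Lit P), SNF.sometime lhs l ∈ S → ∀ i,
      disjHolds τ i (lhs.map Lit.negate ++ [l, posLit (w l)]) := by
    intro lhs l hmemS i
    have hlev : l ∈ evLits S := ⟨lhs, hmemS⟩
    by_cases hconj : conjHolds σ i lhs
    · obtain ⟨k, hk, hkl⟩ := hσ i _ hmemS hconj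
      by_cases hil : Lit.holds σ i l
      · exact ⟨l, List.mem_append_right _ (List.mem_cons_self),
          (hLit l (hev l hlev) i).mpr hil⟩
      · refine ⟨posLit (w l), List.mem_append_right _ (by simp), ?_⟩
        rw [posLit_holds]
        exact (hW l hlev i).mpr ⟨hil, k, hk, hkl⟩
    · rw [conjHolds] at hconj
      push_neg at hconj
      obtain ⟨k₀, hk₀, hnk₀⟩ := hconj
      have hsym : k₀.sym ∉ w '' evLits S :=
        hfresh _ hmemS k₀.sym ⟨k₀, List.mem_cons_of_mem _ hk₀, rfl⟩
      refine ⟨Lit.negate k₀, List.mem_append_left _ (List.mem_map_of_mem hk₀), ?_⟩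
      rw [hLit (Lit.negate k₀) hsym i, negate_holds]
      exact hnk₀
  constructor
  · -- IsModel τ (Aug S w)
    intro i c hc
    rcases hc with ((hc | hc) | hc) | hc
    · -- c ∈ S
      cases c with
      | initial rhs =>
        intro h0
        obtain ⟨l, hl, hholds⟩ := hσ i _ hc h0
        exact ⟨l, hl, (hLit l (hfresh _ hc l.sym ⟨l, hl, rfl⟩) i).mpr hholds⟩
      | step lhs rhs =>
        intro hconj
        have hconj' : conjHolds σ i lhs := fun l hl =>
          (hLit l (hfresh _ hc l.sym ⟨l, List.mem_append_left _ hl, rfl⟩) i).mp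
            (hconj l hl)
        obtain ⟨l, hl, hholds⟩ := hσ i _ hc hconj'
        exact ⟨l, hl, (hLit l (hfresh _ hc l.sym
          ⟨l, List.mem_append_right _ hl, rfl⟩) (i+1)).mpr hholds⟩
      | sometime lhs ev =>
        intro hconj
        have hconj' : conjHolds σ i lhs := fun l hl =>
          (hLit l (hfresh _ hc l.sym ⟨l, List.mem_cons_of_mem _ hl, rfl⟩) i).mp
            (hconj l hl)
        obtain ⟨k, hk, hkl⟩ := hσ i _ hc hconj'
        exact ⟨k, hk, (hLit ev (hfresh _ hc ev.sym
          ⟨ev, List.mem_cons_self, rfl⟩) k).mpr hkl⟩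
    · -- w_l ⇒ ◯(l ∨ w_l)
      obtain ⟨l, hl, rfl⟩ := hc
      intro hconj
      have hwl : w l ∈ τ i := by
        have := hconj (posLit (w l)) (List.mem_singleton_self _)
        rwa [posLit_holds] at this
      obtain ⟨hnil, k, hk, hkl⟩ := (hW l hl i).mp hwl
      by_cases hnext : Lit.holds σ (i+1) l
      · exact ⟨l, List.mem_cons_self, (hLit l (hev l hl) (i+1)).mpr hnext⟩
      · have hki : k ≠ i := fun h => hnil (h ▸ hkl)
        have hk' : i + 1 ≤ k := by omega
        refine ⟨posLit (w l), by simp, ?_⟩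
        rw [posLit_holds]
        exact (hW l hl (i+1)).mpr ⟨hnext, k, hk', hkl⟩
    · -- start ⇒ ¬C ∨ l ∨ w_l
      obtain ⟨lhs, l, hmemS, rfl⟩ := hc
      intro _
      exact hcommon lhs l hmemS i
    · -- true ⇒ ◯(¬C ∨ l ∨ w_l)
      obtain ⟨lhs, l, hmemS, rfl⟩ := hc
      intro _
      exact hcommon lhs l hmemS (i+1)
  · -- normality
    intro i l hl
    rw [hW l hl i, hLit l (hev l hl) i]
    constructor
    · rintro ⟨h1, k, hk, hkl⟩
      exact ⟨h1, k, hk, (hLit l (hev l hl) k).mpr hkl⟩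
    · rintro ⟨h1, k, hk, hkl⟩
      exact ⟨h1, k, hk, (hLit l (hev l hl) k).mp hkl⟩

/-- augmented clause sets are well-behaved: if `S` is satisfiable then
`Aug(S)` has a normal model (equivalently, `Aug(S)` is either unsatisfiable or has a
normal model); moreover any model of `S`, extended by giving each `w_l` at every index
the truth value of `¬l ∧ ◇l`, is a normal model of `Aug(S)`. -/
theorem stmt_8 {P : Type} [Countable P] (S : Set (SNF P)) (hfin : S.Finite)
    (w : Lit P → P) (hw : FreshW S w) :
    ((∃ σ : ℕ → Set P, IsModel σ S) → ∃ σ : ℕ → Set P, NormalModel σ S w) ∧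
    ((¬ ∃ σ : ℕ → Set P, IsModel σ (Aug S w)) ∨ ∃ σ : ℕ → Set P, NormalModel σ S w) ∧
    (∀ σ : ℕ → Set P, IsModel σ S → NormalModel (extendW S w σ) S w) := by
  have hsub : ∀ σ : ℕ → Set P, IsModel σ (Aug S w) → IsModel σ S := by
    intro σ h i c hc
    exact h i c (Or.inl (Or.inl (Or.inl hc)))
  refine ⟨?_, ?_, fun σ h => key_extend S w hw σ h⟩
  · rintro ⟨σ, h⟩
    exact ⟨_, key_extend S w hw σ h⟩
  · by_cases hA : ∃ σ : ℕ → Set P, IsModel σ (Aug S w)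
    · obtain ⟨σ, h⟩ := hA
      exact Or.inr ⟨_, key_extend S w hw σ (hsub σ h)⟩
    · exact Or.inl hA
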